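/- Assume c_m ≠ 0 and fix τ₀ ∈ X₀. Let f_{τ₀} : ℕⁿ → K be the (unique) solution of the difference equation Σ_{0 ≤ α ≤ m} c_α f(x+α) = 0 (for all x ∈ ℕⁿ) whose restriction to X₀ is the delta function at τ₀ (equal to 1 at τ₀ and 0 at every other point of X₀), i.e. the discrete Green's function. Then its generating series G_{τ₀} = Σ_{x ∈ ℕⁿ} f_{τ₀}(x) · w^{x+I} satisfies Q · G_{τ₀} = w^{τ₀+I} · Σ_{α ≤ m, ¬(α ≤ τ₀)} c_α · w^{m−α} in K⟦w₁,…,wₙ⟧; in particular, since Q has nonzero constant term c_m, the series G_{τ₀} is rational. -/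

import Mathlib

/-- A formal power series `H ∈ K⟦w₁,…,wₙ⟧` is rational if `B·H = A` for polynomials
`A, B` with `B` having nonzero constant term. -/
def IsRationalMvPowerSeries {n : ℕ} {K : Type*} [Field K]
    (H : MvPowerSeries (Fin n) K) : Prop :=
  ∃ A B : MvPolynomial (Fin n) K, MvPolynomial.coeff 0 B ≠ 0 ∧
    (B : MvPowerSeries (Fin n) K) * H = (A : MvPowerSeries (Fin n) K)

/-- Proposition 1 of the paper: the generating series `G_{τ₀}` of the discrete Green's
function `f_{τ₀}` (the solution of the difference equation whose initial data is the
delta function at `τ₀ ∈ X₀`) satisfies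
`Q · G_{τ₀} = w^{τ₀+I} · Σ_{α ≤ m, ¬(α ≤ τ₀)} c_α w^{m−α}`; in particular `G_{τ₀}` is
rational. -/
theorem discrete_green_function_generating_series
    (n : ℕ) (hn : 1 ≤ n) (K : Type*) [Field K]
    (m : Fin n →₀ ℕ) (c : (Fin n →₀ ℕ) → K) (hc : c m ≠ 0)
    (τ₀ : Fin n →₀ ℕ) (hτ₀ : ¬ m ≤ τ₀)
    (f : (Fin n →₀ ℕ) → K)
    (hf : ∀ x : Fin n →₀ ℕ, ∑ α ∈ Finset.Iic m, c α * f (x + α) = 0)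
    (hδ : ∀ x : Fin n →₀ ℕ, ¬ m ≤ x → f x = if x = τ₀ then 1 else 0)
    (I : Fin n →₀ ℕ) (hI : ∀ j, I j = 1)
    (G : MvPowerSeries (Fin n) K)
    (hG : ∀ e : Fin n →₀ ℕ,
      MvPowerSeries.coeff e G = if I ≤ e then f (e - I) else 0)
    (Q : MvPowerSeries (Fin n) K)
    (hQ : Q = ∑ α ∈ Finset.Iic m, (MvPowerSeries.monomial (m - α)) (c α)) :
    Q * G = (MvPowerSeries.monomial (τ₀ + I)) 1 *
        ∑ α ∈ (Finset.Iic m).filter (fun α => ¬ α ≤ τ₀),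
          (MvPowerSeries.monomial (m - α)) (c α) ∧
      IsRationalMvPowerSeries G := by
  classical
  have key : Q * G = (MvPowerSeries.monomial (τ₀ + I)) 1 *
      ∑ α ∈ (Finset.Iic m).filter (fun α => ¬ α ≤ τ₀),
        (MvPowerSeries.monomial (m - α)) (c α) := by
    ext e
    rw [hQ, Finset.sum_mul, map_sum, Finset.mul_sum, map_sum]
    simp only [MvPowerSeries.monomial_mul_monomial, one_mul,
      MvPowerSeries.coeff_monomial_mul, MvPowerSeries.coeff_monomial, hG]
    rw [Finset.sum_filter]
    -- a helper used in both cases : if `e = τ₀ + I + (m - α)` and `α ≤ τ₀` then `m + I ≤ e`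
    have hkey : ∀ α : Fin n →₀ ℕ, α ≤ m → e = τ₀ + I + (m - α) → α ≤ τ₀ → m + I ≤ e := by
      intro α hαm he hατ
      rw [Finsupp.le_def]
      intro j
      have he' := DFunLike.congr_fun he j
      have h1 : α j ≤ m j := hαm j
      have h2 : α j ≤ τ₀ j := hατ j
      simp only [Finsupp.add_apply, Finsupp.tsub_apply] at he' ⊢
      omega
    by_cases hA : m + I ≤ e
    · -- many initial conditions active: the full recurrence applies
      set x := e - (m + I) with hx
      have hex : e = x + (m + I) := by
        rw [hx, tsub_add_cancel_of_le hA]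
      have hL : ∀ α ∈ Finset.Iic m,
          (if m - α ≤ e then c α * (if I ≤ e - (m - α) then f (e - (m - α) - I) else 0) else 0)
            = c α * f (x + α) := by
        intro α hα
        rw [Finset.mem_Iic] at hα
        have h1 : m - α ≤ e := by
          rw [Finsupp.le_def]; intro j
          have := Finsupp.le_def.mp hA j
          have := hα j
          simp only [Finsupp.add_apply, Finsupp.tsub_apply] at *
          omega
        have h2 : I ≤ e - (m - α) := by
          rw [Finsupp.le_def]; intro j
          have := Finsupp.le_def.mp hA j
          have := hα j
          simp only [Finsupp.add_apply, Finsupp.tsub_apply] at *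
          omega
        have h3 : e - (m - α) - I = x + α := by
          ext j
          have he' := DFunLike.congr_fun hex j
          have := hα j
          simp only [Finsupp.add_apply, Finsupp.tsub_apply] at *
          omega
        rw [if_pos h1, if_pos h2, h3]
      have hR : ∀ α ∈ Finset.Iic m,
          (if ¬ α ≤ τ₀ then (if e = τ₀ + I + (m - α) then c α else 0) else 0) = 0 := by
        intro α hα
        rw [Finset.mem_Iic] at hα
        by_cases hατ : α ≤ τ₀
        · rw [if_neg (by simpa using hατ)]
        · rw [if_pos hατ]
          rw [if_neg]
          intro he
          -- then `e - (m + I) + m ≤ τ₀ + (m - α) + ...`, derive `m ≤ τ₀` would be wrong;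
          -- instead derive `α ≤ τ₀` directly
          apply hατ
          rw [Finsupp.le_def]
          intro j
          have he' := DFunLike.congr_fun he j
          have h1 := hα j
          have h2 := Finsupp.le_def.mp hA j
          simp only [Finsupp.add_apply, Finsupp.tsub_apply] at *
          omega
      rw [Finset.sum_congr rfl hL, Finset.sum_congr rfl hR, hf x, Finset.sum_const_zero]
    · -- boundary region: only the delta initial condition can contribute
      apply Finset.sum_congr rfl
      intro α hα
      rw [Finset.mem_Iic] at hα
      by_cases h1 : m - α ≤ e
      · by_cases h2 : I ≤ e - (m - α)
        · set t := e - (m - α) - I with htdef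
          have het : e = t + I + (m - α) := by
            have e1 : t + I = e - (m - α) := tsub_add_cancel_of_le h2
            have e2 : e - (m - α) + (m - α) = e := tsub_add_cancel_of_le h1
            rw [e1, e2]
          have hiff : e = τ₀ + I + (m - α) ↔ t = τ₀ := by
            constructor
            · intro h
              rw [htdef, h, add_tsub_cancel_right, add_tsub_cancel_right]
            · intro h; rw [← h]; exact het
          have ht : ¬ m ≤ t := by
            intro hmt
            apply hA
            calc m + I ≤ t + I := add_le_add_left hmt I
              _ ≤ t + I + (m - α) := le_add_right le_rfl
              _ = e := het.symm
          rw [if_pos h1, if_pos h2, hδ t ht]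
          by_cases h3 : t = τ₀
          · have he : e = τ₀ + I + (m - α) := hiff.mpr h3
            have hατ : ¬ α ≤ τ₀ := by
              intro hατ
              exact hA (hkey α hα he hατ)
            rw [if_pos h3, if_pos hατ, if_pos he, mul_one]
          · rw [if_neg h3, mul_zero, if_neg (fun h => h3 (hiff.mp h)), ite_self]
        · have hne : ¬ e = τ₀ + I + (m - α) := by
            intro h
            apply h2
            rw [h, add_tsub_cancel_right]
            exact le_add_self
          rw [if_pos h1, if_neg h2, mul_zero]
          by_cases hατ : α ≤ τ₀
          · rw [if_neg (by simpa using hατ)]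
          · rw [if_pos hατ, if_neg hne]
      · have hne : ¬ e = τ₀ + I + (m - α) := by
          intro h
          apply h1
          rw [h]
          exact le_add_self
        rw [if_neg h1]
        by_cases hατ : α ≤ τ₀
        · rw [if_neg (by simpa using hατ)]
        · rw [if_pos hατ, if_neg hne]
  refine ⟨key, ?_⟩
  refine ⟨MvPolynomial.monomial (τ₀ + I) 1 *
      ∑ α ∈ (Finset.Iic m).filter (fun α => ¬ α ≤ τ₀), MvPolynomial.monomial (m - α) (c α),
    ∑ α ∈ Finset.Iic m, MvPolynomial.monomial (m - α) (c α), ?_, ?_⟩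
  · rw [MvPolynomial.coeff_sum]
    rw [Finset.sum_eq_single m]
    · simpa using hc
    · intro α hα hne
      rw [Finset.mem_Iic] at hα
      rw [MvPolynomial.coeff_monomial, if_neg]
      intro h
      apply hne
      have := tsub_eq_zero_iff_le.mp h
      exact le_antisymm hα this
    · intro h
      exact absurd (Finset.mem_Iic.mpr le_rfl) h
  · have hB : ((∑ α ∈ Finset.Iic m, MvPolynomial.monomial (m - α) (c α) :
        MvPolynomial (Fin n) K) : MvPowerSeries (Fin n) K) = Q := by
      rw [hQ, ← MvPolynomial.coeToMvPowerSeries.ringHom_apply, map_sum]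
      simp only [MvPolynomial.coeToMvPowerSeries.ringHom_apply, MvPolynomial.coe_monomial]
    have hA : ((MvPolynomial.monomial (τ₀ + I) 1 *
        ∑ α ∈ (Finset.Iic m).filter (fun α => ¬ α ≤ τ₀),
          MvPolynomial.monomial (m - α) (c α) : MvPolynomial (Fin n) K) :
        MvPowerSeries (Fin n) K) =
        (MvPowerSeries.monomial (τ₀ + I)) 1 *
          ∑ α ∈ (Finset.Iic m).filter (fun α => ¬ α ≤ τ₀),
            (MvPowerSeries.monomial (m - α)) (c α) := by
      rw [MvPolynomial.coe_mul, MvPolynomial.coe_monomial,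
        ← MvPolynomial.coeToMvPowerSeries.ringHom_apply (∑ _ ∈ _, _), map_sum]
      simp only [MvPolynomial.coeToMvPowerSeries.ringHom_apply, MvPolynomial.coe_monomial]
    rw [hB, hA, key]
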